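/- Let v₁, …, vₛ ∈ ℝˢ span ℝˢ, and for each j let Bⱼ be a symmetric positive semidefinite matrix with 0 < ‖Bⱼ‖₂ ≤ 1 and Bⱼ/‖Bⱼ‖₂ the orthogonal projector onto span(vⱼ). Then the spectral norm of the product A = (I − Bₛ)(I − B_{s−1})⋯(I − B₁) satisfies ‖A‖₂ < 1. -/

import Mathlib

open Matrix
open scoped InnerProductSpace

/-- A product of nonexpansive operators is nonexpansive. -/
lemma aux_prod_nonexpansive {E : Type*} [NormedAddCommGroup E] [NormedSpace ℝ E]
    (l : List (E →L[ℝ] E)) (h : ∀ T ∈ l, ∀ y : E, ‖T y‖ ≤ ‖y‖) (x : E) :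
    ‖l.prod x‖ ≤ ‖x‖ := by
  induction l with
  | nil => simp
  | cons T l ih =>
    rw [List.prod_cons, ContinuousLinearMap.mul_apply]
    exact le_trans (h T (List.mem_cons_self) _)
      (ih fun S hS => h S (List.mem_cons_of_mem _ hS))

/-- If each factor is nonexpansive and rigid (norm equality forces fixing), then norm
equality for the product forces every factor to fix the vector. -/
lemma aux_prod_rigid {E : Type*} [NormedAddCommGroup E] [NormedSpace ℝ E]
    (l : List (E →L[ℝ] E))
    (h : ∀ T ∈ l, (∀ y : E, ‖T y‖ ≤ ‖y‖) ∧ (∀ y : E, ‖T y‖ = ‖y‖ → T y = y))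
    (x : E) (hx : ‖l.prod x‖ = ‖x‖) : l.prod x = x ∧ ∀ T ∈ l, T x = x := by
  induction l with
  | nil => simp
  | cons T l ih =>
    have hmem : ∀ S ∈ l, (∀ y : E, ‖S y‖ ≤ ‖y‖) ∧ (∀ y : E, ‖S y‖ = ‖y‖ → S y = y) :=
      fun S hS => h S (List.mem_cons_of_mem _ hS)
    have hy_le : ‖l.prod x‖ ≤ ‖x‖ := aux_prod_nonexpansive l (fun S hS => (hmem S hS).1) x
    have hTy : ‖T (l.prod x)‖ = ‖x‖ := by
      rw [← hx, List.prod_cons, ContinuousLinearMap.mul_apply]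
    have h1 : ‖x‖ ≤ ‖l.prod x‖ := hTy ▸ (h T (List.mem_cons_self)).1 (l.prod x)
    obtain ⟨hyx, hall⟩ := ih hmem (le_antisymm hy_le h1)
    have hTy' : ‖T x‖ = ‖x‖ := by rw [hyx] at hTy; exact hTy
    have hTx : T x = x := (h T (List.mem_cons_self)).2 x hTy'
    refine ⟨?_, ?_⟩
    · rw [List.prod_cons, ContinuousLinearMap.mul_apply, hyx, hTx]
    · intro S hS
      rcases List.mem_cons.1 hS with rfl | hS
      · exact hTx
      · exact hall S hS

/-- If `v₁, …, vₛ` span `ℝˢ` and each `Bⱼ` is symmetric PSD with `0 < ‖Bⱼ‖₂ ≤ 1` and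
`Bⱼ/‖Bⱼ‖₂` the orthogonal projector onto `span(vⱼ)`, then the product
`A = (I - Bₛ)⋯(I - B₁)` has spectral norm `‖A‖₂ < 1`. -/
theorem product_of_relaxed_projections_contraction (s : ℕ)
    (v : Fin s → EuclideanSpace ℝ (Fin s))
    (hspan : Submodule.span ℝ (Set.range v) = ⊤)
    (B : Fin s → Matrix (Fin s) (Fin s) ℝ)
    (hpsd : ∀ j, (B j).PosSemidef)
    (hpos : ∀ j, 0 < ‖Matrix.toEuclideanCLM (𝕜 := ℝ) (B j)‖)
    (hle : ∀ j, ‖Matrix.toEuclideanCLM (𝕜 := ℝ) (B j)‖ ≤ 1)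
    (hidem : ∀ j, (‖Matrix.toEuclideanCLM (𝕜 := ℝ) (B j)‖⁻¹ • B j)
        * (‖Matrix.toEuclideanCLM (𝕜 := ℝ) (B j)‖⁻¹ • B j)
      = ‖Matrix.toEuclideanCLM (𝕜 := ℝ) (B j)‖⁻¹ • B j)
    (hrange : ∀ j,
      LinearMap.range (‖Matrix.toEuclideanCLM (𝕜 := ℝ) (B j)‖⁻¹ • B j).mulVecLin
        = Submodule.span ℝ {fun i => v j i}) :
    ‖Matrix.toEuclideanCLM (𝕜 := ℝ)
        ((List.ofFn (fun j : Fin s => (1 : Matrix (Fin s) (Fin s) ℝ) - B j)).reverse.prod)‖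
      < 1 := by
  classical
  set φ : Matrix (Fin s) (Fin s) ℝ ≃⋆ₐ[ℝ]
      (EuclideanSpace ℝ (Fin s) →L[ℝ] EuclideanSpace ℝ (Fin s)) :=
    Matrix.toEuclideanCLM (𝕜 := ℝ) with hφ
  set c : Fin s → ℝ := fun j => ‖φ (B j)‖ with hc
  set P : Fin s → (EuclideanSpace ℝ (Fin s) →L[ℝ] EuclideanSpace ℝ (Fin s)) := fun j => φ ((c j)⁻¹ • B j) with hP
  -- basic facts about P j
  have hPidem : ∀ j (x : EuclideanSpace ℝ (Fin s)), P j (P j x) = P j x := by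
    intro j x
    have := congrArg (fun M => φ M x) (hidem j)
    simp only [_root_.map_mul, ContinuousLinearMap.mul_apply] at this
    exact this
  have hPsym : ∀ j (x y : EuclideanSpace ℝ (Fin s)), ⟪P j x, y⟫_ℝ = ⟪x, P j y⟫_ℝ := by
    intro j
    have hHerm : ((c j)⁻¹ • B j).IsHermitian := by
      have h := (hpsd j).1
      simp only [Matrix.IsHermitian] at h ⊢
      rw [Matrix.conjTranspose_smul, h]
      congr 1
    have := Matrix.isHermitian_iff_isSymmetric.1 hHerm
    intro x y
    exact this x y
  have hBP : ∀ j, φ (B j) = c j • P j := by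
    intro j
    show φ (B j) = c j • φ ((c j)⁻¹ • B j)
    rw [_root_.map_smul, smul_smul, mul_inv_cancel₀ (ne_of_gt (hpos j)), one_smul]
  have hinner : ∀ j (x : EuclideanSpace ℝ (Fin s)), ⟪x, P j x⟫_ℝ = ‖P j x‖ ^ 2 := by
    intro j x
    calc ⟪x, P j x⟫_ℝ = ⟪x, P j (P j x)⟫_ℝ := by rw [hPidem]
    _ = ⟪P j x, P j x⟫_ℝ := (hPsym j x (P j x)).symm
    _ = ‖P j x‖ ^ 2 := real_inner_self_eq_norm_sq _
  -- the key norm identity for T j = I - B j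
  have hT : ∀ j (x : EuclideanSpace ℝ (Fin s)), φ (1 - B j) x = x - c j • P j x := by
    intro j x
    rw [_root_.map_sub, _root_.map_one, hBP j]
    simp [ContinuousLinearMap.sub_apply]
  have hTnorm : ∀ j (x : EuclideanSpace ℝ (Fin s)),
      ‖φ (1 - B j) x‖ ^ 2 = ‖x‖ ^ 2 - (c j * (2 - c j)) * ‖P j x‖ ^ 2 := by
    intro j x
    rw [hT, norm_sub_sq_real, real_inner_smul_right, hinner, norm_smul]
    rw [mul_pow, Real.norm_eq_abs, sq_abs]
    ring
  have hcpos : ∀ j, 0 < c j * (2 - c j) := by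
    intro j
    have h1 := hpos j
    have h2 := hle j
    nlinarith
  have hkey : ∀ j, (∀ y : EuclideanSpace ℝ (Fin s), ‖φ (1 - B j) y‖ ≤ ‖y‖) ∧
      (∀ y : EuclideanSpace ℝ (Fin s), ‖φ (1 - B j) y‖ = ‖y‖ → φ (1 - B j) y = y) := by
    intro j
    constructor
    · intro y
      have h1 := hTnorm j y
      have h2 := hcpos j
      have h3 : (0:ℝ) ≤ ‖P j y‖ ^ 2 := sq_nonneg _
      nlinarith [norm_nonneg (φ (1 - B j) y), norm_nonneg y]
    · intro y hy
      have h1 := hTnorm j y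
      rw [hy] at h1
      have h2 : (c j * (2 - c j)) * ‖P j y‖ ^ 2 = 0 := by linarith
      have h3 : ‖P j y‖ ^ 2 = 0 := by
        rcases mul_eq_zero.1 h2 with h | h
        · exact absurd h (ne_of_gt (hcpos j))
        · exact h
      have h4 : P j y = 0 := by
        rwa [pow_eq_zero_iff two_ne_zero, norm_eq_zero] at h3
      rw [hT, h4, smul_zero, sub_zero]
  -- the product operator
  set l : List (EuclideanSpace ℝ (Fin s) →L[ℝ] EuclideanSpace ℝ (Fin s)) :=
    ((List.ofFn (fun j : Fin s => (1 : Matrix (Fin s) (Fin s) ℝ) - B j)).reverse.map φ) with hl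
  have hAl : φ ((List.ofFn (fun j : Fin s => (1 : Matrix (Fin s) (Fin s) ℝ) - B j)).reverse.prod)
      = l.prod := map_list_prod φ _
  have hlmem : ∀ T ∈ l, ∃ j, T = φ (1 - B j) := by
    intro T hT
    rw [hl, List.mem_map] at hT
    obtain ⟨M, hM, rfl⟩ := hT
    rw [List.mem_reverse, List.mem_ofFn] at hM
    obtain ⟨j, rfl⟩ := hM
    exact ⟨j, rfl⟩
  have hlprop : ∀ T ∈ l, (∀ y : EuclideanSpace ℝ (Fin s), ‖T y‖ ≤ ‖y‖) ∧ (∀ y : EuclideanSpace ℝ (Fin s), ‖T y‖ = ‖y‖ → T y = y) := by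
    intro T hT
    obtain ⟨j, rfl⟩ := hlmem T hT
    exact hkey j
  rw [hAl]
  -- norm is at most 1
  have hle1 : ∀ x : EuclideanSpace ℝ (Fin s), ‖l.prod x‖ ≤ ‖x‖ :=
    aux_prod_nonexpansive l (fun T hT => (hlprop T hT).1)
  rcases Nat.eq_zero_or_pos s with rfl | hs
  · -- trivial space
    haveI : Subsingleton (EuclideanSpace ℝ (Fin 0)) := ⟨fun a b => by ext i; exact i.elim0⟩
    rw [Subsingleton.elim l.prod 0, norm_zero]
    norm_num
  · haveI : Nonempty (Fin s) := ⟨⟨0, hs⟩⟩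
    haveI : Nontrivial (EuclideanSpace ℝ (Fin s)) := inferInstance
    obtain ⟨x₀, hx₀s, hmax⟩ := (isCompact_sphere (0:EuclideanSpace ℝ (Fin s)) 1).exists_isMaxOn
      (NormedSpace.sphere_nonempty.mpr zero_le_one)
      ((continuous_norm.comp (l.prod : EuclideanSpace ℝ (Fin s) →L[ℝ] EuclideanSpace ℝ (Fin s)).continuous).continuousOn)
    have hx₀ : ‖x₀‖ = 1 := mem_sphere_zero_iff_norm.1 hx₀s
    have hnorm_le : ‖l.prod‖ ≤ ‖l.prod x₀‖ := by
      refine ContinuousLinearMap.opNorm_le_of_unit_norm (norm_nonneg _) ?_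
      intro x hx
      exact hmax (mem_sphere_zero_iff_norm.2 hx)
    refine lt_of_le_of_lt hnorm_le ?_
    have hAx_le : ‖l.prod x₀‖ ≤ 1 := by simpa [hx₀] using hle1 x₀
    rcases lt_or_eq_of_le hAx_le with h | h
    · exact h
    -- equality case: derive contradiction
    exfalso
    have heq : ‖l.prod x₀‖ = ‖x₀‖ := by rw [h, hx₀]
    obtain ⟨-, hfix⟩ := aux_prod_rigid l hlprop x₀ heq
    -- every P j kills x₀
    have hPx : ∀ j, P j x₀ = 0 := by
      intro j
      have hTfix : φ (1 - B j) x₀ = x₀ := by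
        refine hfix (φ (1 - B j)) ?_
        rw [hl, List.mem_map]
        refine ⟨1 - B j, ?_, rfl⟩
        rw [List.mem_reverse, List.mem_ofFn]
        exact ⟨j, rfl⟩
      have := hT j x₀
      rw [hTfix] at this
      have h0 : c j • P j x₀ = 0 := by
        have := sub_eq_self.1 this.symm
        exact this
      have := smul_eq_zero.1 h0
      rcases this with h | h
      · exact absurd h (ne_of_gt (hpos j))
      · exact h
    -- hence x₀ ⟂ v j for every j
    have hperp : ∀ j, ⟪v j, x₀⟫_ℝ = 0 := by
      intro j
      have hv : (fun i => v j i) ∈ LinearMap.range ((c j)⁻¹ • B j).mulVecLin := by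
        rw [hrange j]
        exact Submodule.mem_span_singleton_self _
      obtain ⟨u, hu⟩ := hv
      have hvP : v j = P j ((WithLp.equiv 2 _).symm u) := by
        have : P j ((WithLp.equiv 2 _).symm u) =
            (WithLp.equiv 2 _).symm (Matrix.toLin' ((c j)⁻¹ • B j) u) :=
          Matrix.toEuclideanCLM_toLp _ _
        rw [this]
        ext i
        have := congrFun hu i
        simpa [Matrix.mulVecLin_apply, Matrix.smul_mulVec] using this.symm
      rw [hvP, ← hPidem j, hPsym j, hPsym j, hPx j]
      simp
    -- x₀ is orthogonal to a spanning set, so x₀ = 0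
    have hker : Submodule.span ℝ (Set.range v) ≤
        LinearMap.ker ((innerSL ℝ x₀ : EuclideanSpace ℝ (Fin s) →L[ℝ] ℝ) : EuclideanSpace ℝ (Fin s) →ₗ[ℝ] ℝ) := by
      rw [Submodule.span_le]
      rintro _ ⟨j, rfl⟩
      simp only [SetLike.mem_coe, LinearMap.mem_ker, ContinuousLinearMap.coe_coe,
        innerSL_apply_apply]
      rw [real_inner_comm]
      exact hperp j
    have hx₀0 : x₀ = 0 := by
      have : x₀ ∈ LinearMap.ker ((innerSL ℝ x₀ : EuclideanSpace ℝ (Fin s) →L[ℝ] ℝ) : EuclideanSpace ℝ (Fin s) →ₗ[ℝ] ℝ) := by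
        apply hker
        rw [hspan]; trivial
      simp only [LinearMap.mem_ker, ContinuousLinearMap.coe_coe, innerSL_apply_apply] at this
      exact inner_self_eq_zero.1 this
    rw [hx₀0, norm_zero] at hx₀
    norm_num at hx₀
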